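/- arXiv:1512.05167 — 4 statements merged into one kernel-verified Lean document; each statement's English description precedes it below -/
import Mathlib

section
/- Let k be a field, let λ ∈ k, and let a₀, a₁, a₂ ∈ k satisfy a₀³ + a₁³ + a₂³ + λa₀a₁a₂ = 0. Then in k[X₀, X₁, X₂], the determinant of the Moore matrix M = [[a₀X₀, a₁X₂, a₂X₁], [a₁X₁, a₂X₀, a₀X₂], [a₂X₂, a₀X₁, a₁X₀]] equals a₀a₁a₂·(X₀³ + X₁³ + X₂³ + λX₀X₁X₂). In particular, if a₀a₁a₂ ≠ 0, then M is a linear determinantal representation over k of the Hesse cubic X₀³ + X₁³ + X₂³ + λX₀X₁X₂ = 0. -/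
open MvPolynomial

/-- `M` is a linear determinantal representation of the ternary form `f`: all entries of `M`
are homogeneous linear forms in `X₀, X₁, X₂` and `det M = c • f` for some nonzero scalar `c`. -/
def IsLDR {k : Type*} [Field k] (n : ℕ) (f : MvPolynomial (Fin 3) k)
    (M : Matrix (Fin n) (Fin n) (MvPolynomial (Fin 3) k)) : Prop :=
  (∀ i j, (M i j).IsHomogeneous 1) ∧ ∃ c : k, c ≠ 0 ∧ M.det = C c * f

/-- `f` admits a linear determinantal representation by an `n × n` matrix of linear forms. -/
def AdmitsLDR {k : Type*} [Field k] (n : ℕ) (f : MvPolynomial (Fin 3) k) : Prop :=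
  ∃ M, IsLDR n f M

/-- Two linear determinantal representations are equivalent if `M' = A * M * B` for some
invertible scalar matrices `A`, `B` over `k`. -/
def LDREquiv {k : Type*} [Field k] {n : ℕ}
    (M M' : Matrix (Fin n) (Fin n) (MvPolynomial (Fin 3) k)) : Prop :=
  ∃ A B : Matrix (Fin n) (Fin n) k, IsUnit A.det ∧ IsUnit B.det ∧
    M' = A.map C * M * B.map C

/-- `f` defines a smooth plane curve: `f ≠ 0` and, over an algebraic closure of `k`, the only
common zero of `f` and its three partial derivatives is the origin. -/
def DefinesSmoothPlaneCurve {k : Type*} [Field k] (f : MvPolynomial (Fin 3) k) : Prop :=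
  f ≠ 0 ∧ ∀ x : Fin 3 → AlgebraicClosure k,
    (eval x (map (algebraMap k (AlgebraicClosure k)) f) = 0 ∧
      ∀ i, eval x (pderiv i (map (algebraMap k (AlgebraicClosure k)) f)) = 0) → x = 0

/-- The Weierstrass plane cubic form `X₁²X₂ − X₀³ − aX₀X₂² − bX₂³`. -/
noncomputable def WCubic {k : Type*} [Field k] (a b : k) : MvPolynomial (Fin 3) k :=
  X 1 ^ 2 * X 2 - X 0 ^ 3 - C a * X 0 * X 2 ^ 2 - C b * X 2 ^ 3

/-- the Moore matrix of a point `(a₀ : a₁ : a₂)` on the Hesse cubic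
`X₀³ + X₁³ + X₂³ + λX₀X₁X₂ = 0` has determinant `a₀a₁a₂ · (X₀³ + X₁³ + X₂³ + λX₀X₁X₂)`;
in particular, if `a₀a₁a₂ ≠ 0`, it is a linear determinantal representation of the Hesse
cubic over `k`. -/
theorem stmt_1 {k : Type*} [Field k] (lam a0 a1 a2 : k)
    (h : a0 ^ 3 + a1 ^ 3 + a2 ^ 3 + lam * a0 * a1 * a2 = 0) :
    (!![C a0 * X 0, C a1 * X 2, C a2 * X 1;
        C a1 * X 1, C a2 * X 0, C a0 * X 2;
        C a2 * X 2, C a0 * X 1, C a1 * X 0] :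
          Matrix (Fin 3) (Fin 3) (MvPolynomial (Fin 3) k)).det =
      C (a0 * a1 * a2) * (X 0 ^ 3 + X 1 ^ 3 + X 2 ^ 3 + C lam * X 0 * X 1 * X 2) ∧
    (a0 * a1 * a2 ≠ 0 →
      IsLDR 3 (X 0 ^ 3 + X 1 ^ 3 + X 2 ^ 3 + C lam * X 0 * X 1 * X 2)
        !![C a0 * X 0, C a1 * X 2, C a2 * X 1;
           C a1 * X 1, C a2 * X 0, C a0 * X 2;
           C a2 * X 2, C a0 * X 1, C a1 * X 0]) := by

  have hdet : (!![C a0 * X 0, C a1 * X 2, C a2 * X 1;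
        C a1 * X 1, C a2 * X 0, C a0 * X 2;
        C a2 * X 2, C a0 * X 1, C a1 * X 0] :
          Matrix (Fin 3) (Fin 3) (MvPolynomial (Fin 3) k)).det =
      C (a0 * a1 * a2) * (X 0 ^ 3 + X 1 ^ 3 + X 2 ^ 3 + C lam * X 0 * X 1 * X 2) := by
    have hC : (C a0)^3 + (C a1)^3 + (C a2)^3 + C lam * C a0 * C a1 * C a2 = (0 : MvPolynomial (Fin 3) k) := by
      simpa only [C_add, C_mul, C_pow, C_0] using congrArg (C (σ := Fin 3)) h
    simp [Matrix.det_fin_three]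
    linear_combination (-(X 0 * X 1 * X 2) : MvPolynomial (Fin 3) k) * hC
  refine ⟨hdet, fun hne => ⟨?_, a0 * a1 * a2, hne, hdet⟩⟩
  intro i j
  fin_cases i <;> fin_cases j <;>
    simpa using (isHomogeneous_C _ _).mul (isHomogeneous_X k _)
end

section
/- Let k be a field of characteristic different from 2 and 3, and let a, b ∈ k with 4a³ + 27b² ≠ 0. If the group of k-rational points of the elliptic curve y² = x³ + ax + b contains an element of infinite order, then the plane cubic form X₁²X₂ − X₀³ − aX₀X₂² − bX₂³ admits infinitely many pairwise inequivalent linear determinantal representations over k. -/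
open MvPolynomial

namespace Stmt9

variable {k : Type*} [Field k]

/-- The determinantal representation attached to an affine point `(p, q)` (with `q ≠ 0`)
where `l = (3p² + a)/(2q)` is the tangent slope. -/
noncomputable def LM (p q l : k) : Matrix (Fin 3) (Fin 3) (MvPolynomial (Fin 3) k) :=
  !![X 1 + C q * X 2, 0, X 0 - C p * X 2;
     -X 0 - C (2*p) * X 2, X 1 - C q * X 2, C l * X 2;
     -(C l * X 2), X 0 - C p * X 2, X 2]

lemma LM_hom (p q l : k) : ∀ i j, ((LM p q l) i j).IsHomogeneous 1 := by
  have hX : ∀ i : Fin 3, (X i : MvPolynomial (Fin 3) k).IsHomogeneous 1 :=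
    fun i => isHomogeneous_X k i
  have hCX : ∀ (c : k) (i : Fin 3), (C c * X i : MvPolynomial (Fin 3) k).IsHomogeneous 1 :=
    fun c i => isHomogeneous_C_mul_X c i
  intro i j
  fin_cases i <;> fin_cases j <;> simp only [LM, Matrix.cons_val', Matrix.cons_val_zero,
    Matrix.cons_val_one, Matrix.head_cons, Matrix.empty_val', Matrix.cons_val_fin_one,
    Matrix.head_fin_const, Matrix.cons_val_two, Matrix.tail_cons, Fin.mk_one, Fin.mk_zero]
  · exact (hX 1).add (hCX q 2)
  · exact isHomogeneous_zero _ _ _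
  · exact (hX 0).sub (hCX p 2)
  · exact ((hX 0).neg).sub (hCX (2*p) 2)
  · exact (hX 1).sub (hCX q 2)
  · exact hCX l 2
  · exact (hCX l 2).neg
  · exact (hX 0).sub (hCX p 2)
  · exact hX 2

lemma LM_det (a b p q l : k) (hq : q^2 = p^3 + a*p + b) (hl : 2*q*l = 3*p^2 + a) :
    (LM p q l).det = C 1 * WCubic a b := by
  have hq' : (C q : MvPolynomial (Fin 3) k)^2 = C p^3 + C a * C p + C b := by
    simpa only [map_pow, map_add, map_mul] using congrArg (C (σ := Fin 3)) hq
  have hl' : 2 * (C q : MvPolynomial (Fin 3) k) * C l = 3 * C p^2 + C a := by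
    simpa only [map_mul, map_add, map_pow, map_ofNat] using congrArg (C (σ := Fin 3)) hl
  rw [Matrix.det_fin_three]
  simp only [LM, WCubic, C_1, one_mul, map_mul, map_ofNat, Matrix.of_apply, Matrix.cons_val', Matrix.cons_val_zero,
    Matrix.cons_val_one, Matrix.head_cons, Matrix.empty_val', Matrix.cons_val_fin_one,
    Matrix.head_fin_const, Matrix.cons_val_two, Matrix.tail_cons]
  linear_combination (-(X 2 ^ 3) : MvPolynomial (Fin 3) k) * hq' +
    (C p * X 2 ^ 3 - X 0 * X 2 ^ 2) * hl' 

end Stmt9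

namespace Stmt9x
variable {k : Type*} [Field k]
open Stmt9

lemma LM_map_eval (p q l : k) (v : Fin 3 → k) :
    (LM p q l).map (eval v) =
      !![v 1 + q * v 2, 0, v 0 - p * v 2;
         -v 0 - 2*p*v 2, v 1 - q * v 2, l * v 2;
         -(l * v 2), v 0 - p * v 2, v 2] := by
  ext i j
  fin_cases i <;> fin_cases j <;> simp [LM, Matrix.map_apply]

lemma LM_equiv_key (p q l P Q L : k)
    (h : LDREquiv (LM p q l) (LM P Q L)) : l^2 - 2*p = L^2 - 2*P := by
  obtain ⟨A, B, hA, hB, hE⟩ := h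
  have hmap : ∀ v : Fin 3 → k,
      (LM P Q L).map (eval v) = A * (LM p q l).map (eval v) * B := by
    intro v
    rw [hE, Matrix.map_mul, Matrix.map_mul]
    congr 1
    · congr 1
      ext i j; simp [Matrix.map_apply]
    · ext i j; simp [Matrix.map_apply]
  set Mx : Matrix (Fin 3) (Fin 3) k := !![0,0,1;-1,0,0;0,1,0] with hMxdef
  set MxI : Matrix (Fin 3) (Fin 3) k := !![0,-1,0;0,0,1;1,0,0] with hMxIdef
  have hMx1 : Mx * MxI = 1 := by
    norm_num [hMxdef, hMxIdef, Matrix.mul_fin_three, ← Matrix.one_fin_three]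
  have hMx2 : MxI * Mx = 1 := by
    norm_num [hMxdef, hMxIdef, Matrix.mul_fin_three, ← Matrix.one_fin_three]
  have e0x : Mx = A * Mx * B := by
    have h1 := hmap ![1,0,0]
    rw [LM_map_eval, LM_map_eval] at h1
    norm_num [Matrix.cons_val_two, Matrix.tail_cons, Matrix.head_cons] at h1
    convert h1 using 2 <;> norm_num [hMxdef]
  set E : Matrix (Fin 3) (Fin 3) k := !![1,0,0;0,1,0;0,0,0] with hEdef
  have e0y : E = A * E * B := by
    have h1 := hmap ![0,1,0]
    rw [LM_map_eval, LM_map_eval] at h1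
    norm_num [Matrix.cons_val_two, Matrix.tail_cons, Matrix.head_cons] at h1
    convert h1 using 2
  set Mz : Matrix (Fin 3) (Fin 3) k := !![q,0,-p;-(2*p),-q,l;-l,-p,1] with hMzdef
  set Mz' : Matrix (Fin 3) (Fin 3) k := !![Q,0,-P;-(2*P),-Q,L;-L,-P,1] with hMz'def
  have e0z : Mz' = A * Mz * B := by
    have h1 := hmap ![0,0,1]
    rw [LM_map_eval, LM_map_eval] at h1
    norm_num [Matrix.cons_val_two, Matrix.tail_cons, Matrix.head_cons] at h1
    convert h1 using 2
  have hAi := Matrix.nonsing_inv_mul A hA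
  have hMxB : Mx * B = A⁻¹ * Mx := by
    have h1 : A⁻¹ * (A * Mx * B) = Mx * B := by
      rw [← Matrix.mul_assoc, ← Matrix.mul_assoc, hAi, Matrix.one_mul]
    calc Mx * B = A⁻¹ * (A * Mx * B) := h1.symm
      _ = A⁻¹ * Mx := by rw [← e0x]
  have hBdef : B = MxI * (A⁻¹ * Mx) := by
    rw [← hMxB, ← Matrix.mul_assoc, hMx2, Matrix.one_mul]
  have step : ∀ Xm Ym : Matrix (Fin 3) (Fin 3) k,
      Xm = A * Ym * B → Xm * MxI * A = A * (Ym * MxI) := by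
    intro Xm Ym hXY
    rw [hXY, hBdef]
    simp only [Matrix.mul_assoc]
    rw [← Matrix.mul_assoc Mx MxI A, hMx1, Matrix.one_mul, hAi, Matrix.mul_one]
  have hNval : E * MxI = !![(0:k),-1,0;0,0,1;0,0,0] := by
    ext i j
    fin_cases i <;> fin_cases j <;>
      simp [hEdef, hMxIdef, Matrix.mul_apply, Fin.sum_univ_three, Matrix.vecHead, Matrix.vecTail]
  have hcomm : !![(0:k),-1,0;0,0,1;0,0,0] * A = A * !![(0:k),-1,0;0,0,1;0,0,0] := by
    rw [← hNval]; exact step E E e0y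
  have hKval : Mz * MxI = !![-p,-q,0;l,2*p,-q;1,l,-p] := by
    ext i j
    fin_cases i <;> fin_cases j <;>
      simp [hMzdef, hMxIdef, Matrix.mul_apply, Fin.sum_univ_three, Matrix.vecHead, Matrix.vecTail]
  have hKval' : Mz' * MxI = !![-P,-Q,0;L,2*P,-Q;1,L,-P] := by
    ext i j
    fin_cases i <;> fin_cases j <;>
      simp [hMz'def, hMxIdef, Matrix.mul_apply, Fin.sum_univ_three, Matrix.vecHead, Matrix.vecTail]
  have hAK : !![-P,-Q,0;L,2*P,-Q;1,L,-P] * A = A * !![-p,-q,0;l,2*p,-q;1,l,-p] := by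
    rw [← hKval, ← hKval']; exact step Mz' Mz e0z
  -- structure of A from commutation with the nilpotent matrix
  have hcf : ∀ i j, ∑ x : Fin 3, !![(0:k),-1,0;0,0,1;0,0,0] i x * A x j
      = ∑ x : Fin 3, A i x * !![(0:k),-1,0;0,0,1;0,0,0] x j := by
    intro i j
    have hc := congrFun (congrFun hcomm i) j
    simpa [Matrix.mul_apply] using hc
  have f10 : A 1 0 = 0 := by
    have hc := hcf 0 0
    simp [Fin.sum_univ_three, Matrix.vecHead, Matrix.vecTail] at hc
    first | linear_combination hc | linear_combination -hc
  have f20 : A 2 0 = 0 := by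
    have hc := hcf 1 0
    simp [Fin.sum_univ_three, Matrix.vecHead, Matrix.vecTail] at hc
    first | linear_combination hc | linear_combination -hc
  have f21 : A 2 1 = 0 := by
    have hc := hcf 1 1
    simp [Fin.sum_univ_three, Matrix.vecHead, Matrix.vecTail] at hc
    first | linear_combination hc + f10 | linear_combination hc - f10 | linear_combination -hc + f10 | linear_combination -hc - f10
  have f00 : A 0 0 = A 1 1 := by
    have hc := hcf 0 1
    simp [Fin.sum_univ_three, Matrix.vecHead, Matrix.vecTail] at hc
    first | linear_combination hc | linear_combination -hc
  have f22 : A 2 2 = A 1 1 := by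
    have hc := hcf 1 2
    simp [Fin.sum_univ_three, Matrix.vecHead, Matrix.vecTail] at hc
    first | linear_combination hc | linear_combination -hc
  have f01 : A 0 1 = -(A 1 2) := by
    have hc := hcf 0 2
    simp [Fin.sum_univ_three, Matrix.vecHead, Matrix.vecTail] at hc
    first | linear_combination hc | linear_combination -hc
  have hdetval : A.det = A 1 1 ^ 3 := by
    rw [Matrix.det_fin_three, f10, f20, f21, f00, f22]
    ring
  have hα : A 1 1 ≠ 0 := by
    intro h0
    rw [hdetval, h0] at hA
    simp at hA
  have g10 := congrFun (congrFun hAK 1) 0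
  have g11 := congrFun (congrFun hAK 1) 1
  simp [Matrix.mul_apply, Fin.sum_univ_three, Matrix.vecHead, Matrix.vecTail] at g10 g11
  simp only [f10, f20, f21, f00, f01] at g10 g11
  have hfin : A 1 1 * (2*p + L*l - l^2) = A 1 1 * (2*P + L*l - L^2) := by
    first | linear_combination (l+L) * g10 - g11 | linear_combination (-(l+L)) * g10 + g11 | linear_combination (l+L) * g10 + g11 | linear_combination (-(l+L)) * g10 - g11
  have hcan := mul_left_cancel₀ hα hfin
  linear_combination -hcan

end Stmt9x

lemma point_some_eq {F : Type*} [Field F] {W : WeierstrassCurve.Affine F} {x1 y1 x2 y2 : F}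
    (h1 : W.Nonsingular x1 y1) (h2 : W.Nonsingular x2 y2) (hx : x1 = x2) (hy : y1 = y2) :
    WeierstrassCurve.Affine.Point.some _ _ h1 = WeierstrassCurve.Affine.Point.some _ _ h2 := by
  subst hx; subst hy; rfl

open scoped Classical in
/-- over a field of characteristic different from 2 and 3, if the elliptic curve
`y² = x³ + ax + b` (with `4a³ + 27b² ≠ 0`) has a `k`-rational point of infinite order, then
the Weierstrass plane cubic `X₁²X₂ − X₀³ − aX₀X₂² − bX₂³` admits infinitely many pairwise
inequivalent linear determinantal representations over `k`. -/
theorem stmt_9 {k : Type*} [Field k] (h2 : (2 : k) ≠ 0) (h3 : (3 : k) ≠ 0) (a b : k)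
    (hΔ : 4 * a ^ 3 + 27 * b ^ 2 ≠ 0)
    (P : (WeierstrassCurve.mk 0 0 0 a b).toAffine.Point) (hP : ¬ IsOfFinAddOrder P) :
    ∃ M : ℕ → Matrix (Fin 3) (Fin 3) (MvPolynomial (Fin 3) k),
      (∀ n, IsLDR 3 (WCubic a b) (M n)) ∧ ∀ m n, m ≠ n → ¬ LDREquiv (M m) (M n) := by

  classical
  have hnz : ∀ n : ℕ, 0 < n → n • P ≠ 0 := by
    intro n hn h0
    exact hP (isOfFinAddOrder_iff_nsmul_eq_zero.mpr ⟨n, hn, h0⟩)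
  have hex : ∀ n : ℕ, ∃ x y,
      ∃ hxy : (WeierstrassCurve.mk 0 0 0 a b).toAffine.Nonsingular x y,
      (n+1) • P = WeierstrassCurve.Affine.Point.some _ _ hxy := by
    intro n
    cases hQ : (n+1) • P with
    | zero => exact absurd hQ (hnz (n+1) n.succ_pos)
    | some x y hxy => exact ⟨x, y, hxy, rfl⟩
  choose px py hns hsome using hex
  have hq2 : ∀ n, (py n)^2 = (px n)^3 + a * (px n) + b := by
    intro n
    have h := ((WeierstrassCurve.Affine.nonsingular_iff _ _).mp (hns n)).1
    rw [WeierstrassCurve.Affine.equation_iff] at h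
    simpa using h
  have hq0 : ∀ n, py n ≠ 0 := by
    intro n h0
    have hneg : py n = (WeierstrassCurve.mk 0 0 0 a b).toAffine.negY (px n) (py n) := by
      simp [WeierstrassCurve.Affine.negY, h0]
    have hadd := WeierstrassCurve.Affine.Point.add_self_of_Y_eq (h₁ := hns n) hneg
    have h20 : (2*(n+1)) • P = 0 := by
      first
      | rw [mul_nsmul, hsome n, two_nsmul, hadd]
      | rw [mul_nsmul', hsome n, two_nsmul, hadd]
    exact hnz _ (by positivity) h20
  have hYne : ∀ n, py n ≠ (WeierstrassCurve.mk 0 0 0 a b).toAffine.negY (px n) (py n) := by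
    intro n hEq
    simp [WeierstrassCurve.Affine.negY] at hEq
    have : (2 : k) * py n = 0 := by linear_combination hEq
    rcases mul_eq_zero.mp this with h | h
    · exact h2 h
    · exact hq0 n h
  set lam : ℕ → k := fun n => (3 * (px n)^2 + a) / (2 * py n) with hlam
  have hslope : ∀ n, 2 * py n * lam n = 3 * (px n)^2 + a := by
    intro n
    show 2 * py n * ((3 * px n ^ 2 + a) / (2 * py n)) = 3 * px n ^ 2 + a
    rw [mul_div_cancel₀ _ (mul_ne_zero h2 (hq0 n))]
  refine ⟨fun n => Stmt9.LM (px n) (py n) (lam n), fun n => ?_, ?_⟩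
  · exact ⟨Stmt9.LM_hom _ _ _, 1, one_ne_zero, Stmt9.LM_det a b _ _ _ (hq2 n) (hslope n)⟩
  intro m n hmn hEquiv
  have hkey := Stmt9x.LM_equiv_key _ _ _ _ _ _ hEquiv
  -- the doubled points have equal x-coordinates
  have hWslope : ∀ n,
      (WeierstrassCurve.mk 0 0 0 a b).toAffine.slope (px n) (px n) (py n) (py n) = lam n := by
    intro n
    rw [WeierstrassCurve.Affine.slope_of_Y_ne rfl (hYne n)]
    simp only [WeierstrassCurve.Affine.negY, hlam]
    ring_nf
  have hdbl : ∀ j : ℕ, (2*(j+1)) • P = WeierstrassCurve.Affine.Point.some _ _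
      (WeierstrassCurve.Affine.nonsingular_add (hns j) (hns j) (fun h => hYne j h.2)) := by
    intro j
    calc (2*(j+1)) • P = 2 • ((j+1) • P) := (smul_smul 2 (j+1) P).symm
      _ = 2 • (WeierstrassCurve.Affine.Point.some _ _ (hns j)) := by rw [hsome j]
      _ = _ := by
          rw [two_nsmul]
          exact WeierstrassCurve.Affine.Point.add_self_of_Y_ne (hYne j)
  have hXval : ∀ j : ℕ, (WeierstrassCurve.mk 0 0 0 a b).toAffine.addX (px j) (px j)
      ((WeierstrassCurve.mk 0 0 0 a b).toAffine.slope (px j) (px j) (py j) (py j))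
      = lam j ^ 2 - 2 * px j := by
    intro j
    rw [hWslope j]
    simp [WeierstrassCurve.Affine.addX]
    ring
  have hm' := WeierstrassCurve.Affine.nonsingular_add (hns m) (hns m) (fun h => hYne m h.2)
  have hn' := WeierstrassCurve.Affine.nonsingular_add (hns n) (hns n) (fun h => hYne n h.2)
  have hXeq : (WeierstrassCurve.mk 0 0 0 a b).toAffine.addX (px m) (px m)
      ((WeierstrassCurve.mk 0 0 0 a b).toAffine.slope (px m) (px m) (py m) (py m))
      = (WeierstrassCurve.mk 0 0 0 a b).toAffine.addX (px n) (px n)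
      ((WeierstrassCurve.mk 0 0 0 a b).toAffine.slope (px n) (px n) (py n) (py n)) := by
    rw [hXval m, hXval n, hkey]
  have em := ((WeierstrassCurve.Affine.nonsingular_iff _ _).mp hm').1
  have en := ((WeierstrassCurve.Affine.nonsingular_iff _ _).mp hn').1
  rw [WeierstrassCurve.Affine.equation_iff] at em en
  simp only [show (WeierstrassCurve.mk 0 0 0 a b).toAffine.a₁ = 0 from rfl,
    show (WeierstrassCurve.mk 0 0 0 a b).toAffine.a₂ = 0 from rfl,
    show (WeierstrassCurve.mk 0 0 0 a b).toAffine.a₃ = 0 from rfl,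
    show (WeierstrassCurve.mk 0 0 0 a b).toAffine.a₄ = a from rfl,
    show (WeierstrassCurve.mk 0 0 0 a b).toAffine.a₆ = b from rfl] at em en
  rw [hXeq] at em
  have hfac : ((WeierstrassCurve.mk 0 0 0 a b).toAffine.addY (px m) (px m) (py m)
        ((WeierstrassCurve.mk 0 0 0 a b).toAffine.slope (px m) (px m) (py m) (py m))
      - (WeierstrassCurve.mk 0 0 0 a b).toAffine.addY (px n) (px n) (py n)
        ((WeierstrassCurve.mk 0 0 0 a b).toAffine.slope (px n) (px n) (py n) (py n)))
      * ((WeierstrassCurve.mk 0 0 0 a b).toAffine.addY (px m) (px m) (py m)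
        ((WeierstrassCurve.mk 0 0 0 a b).toAffine.slope (px m) (px m) (py m) (py m))
      + (WeierstrassCurve.mk 0 0 0 a b).toAffine.addY (px n) (px n) (py n)
        ((WeierstrassCurve.mk 0 0 0 a b).toAffine.slope (px n) (px n) (py n) (py n))) = 0 := by
    linear_combination em - en
  rcases mul_eq_zero.mp hfac with hY | hY
  · -- equal doubles
    have hPt : WeierstrassCurve.Affine.Point.some _ _ hm' = WeierstrassCurve.Affine.Point.some _ _ hn' :=
      point_some_eq hm' hn' hXeq (by linear_combination hY)
    have hsm : (2*(m+1)) • P = (2*(n+1)) • P := by rw [hdbl m, hdbl n]; exact hPt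
    have hzz : (((2*(m+1) : ℕ) : ℤ) - ((2*(n+1) : ℕ) : ℤ)) • P = 0 := by
      rw [sub_zsmul, natCast_zsmul, natCast_zsmul, hsm, add_neg_cancel]
    refine hP (isOfFinAddOrder_iff_zsmul_eq_zero.mpr ⟨_, ?_, hzz⟩)
    have : (2*(m+1) : ℕ) ≠ (2*(n+1) : ℕ) := by omega
    exact sub_ne_zero_of_ne (by exact_mod_cast this)
  · -- opposite doubles
    have hyneg : (WeierstrassCurve.mk 0 0 0 a b).toAffine.addY (px m) (px m) (py m)
        ((WeierstrassCurve.mk 0 0 0 a b).toAffine.slope (px m) (px m) (py m) (py m))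
        = (WeierstrassCurve.mk 0 0 0 a b).toAffine.negY
          ((WeierstrassCurve.mk 0 0 0 a b).toAffine.addX (px n) (px n)
            ((WeierstrassCurve.mk 0 0 0 a b).toAffine.slope (px n) (px n) (py n) (py n)))
          ((WeierstrassCurve.mk 0 0 0 a b).toAffine.addY (px n) (px n) (py n)
            ((WeierstrassCurve.mk 0 0 0 a b).toAffine.slope (px n) (px n) (py n) (py n))) := by
      simp only [WeierstrassCurve.Affine.negY,
        show (WeierstrassCurve.mk 0 0 0 a b).toAffine.a₁ = 0 from rfl,
        show (WeierstrassCurve.mk 0 0 0 a b).toAffine.a₃ = 0 from rfl]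
      linear_combination hY
    have hPt : WeierstrassCurve.Affine.Point.some _ _ hm'
        = -(WeierstrassCurve.Affine.Point.some _ _ hn') := by
      rw [WeierstrassCurve.Affine.Point.neg_some]
      exact point_some_eq hm' ((WeierstrassCurve.Affine.nonsingular_neg ..).mpr hn') hXeq hyneg
    have hsum : (2*(m+1) + 2*(n+1)) • P = 0 := by
      rw [add_nsmul, hdbl m, hdbl n, hPt, neg_add_cancel]
    exact hnz _ (by positivity) hsum
end

section
/- Let A, B ∈ ℤ with 4A³ + 27B² ≠ 0, and suppose the elliptic curve E: y² = x³ + Ax + B has trivial Mordell–Weil group over ℚ, i.e., there are no λ, μ ∈ ℚ with μ² = λ³ + Aλ + B. Then the plane cubic X₁²X₂ − X₀³ − AX₀X₂² − BX₂³ fails the local-global principle for the existence of linear determinantal representations: it admits a linear determinantal representation over ℝ and over ℚ_p for every prime p, but it does not admit a linear determinantal representation over ℚ. -/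
set_option maxHeartbeats 1000000


open MvPolynomial

lemma map_WCubic {k : Type*} [Field k] (φ : ℚ →+* k) (a b : ℚ) :
    map φ (WCubic a b) = WCubic (φ a) (φ b) := by
  simp [WCubic]

lemma admits_of_point {k : Type*} [Field k] (a b l m : k)
    (hm : m ^ 2 = l ^ 3 + a * l + b) : AdmitsLDR 3 (WCubic a b) := by
  refine ⟨![![0, X 1 - C m * X 2, X 0 - C l * X 2],
            ![-(X 0), C (l ^ 2 + a) * X 2, X 1 + C m * X 2],
            ![X 2, X 0 + C l * X 2, 0]], ?_, 1, one_ne_zero, ?_⟩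
  · have hCX : ∀ (r : k) (i : Fin 3), ((C r * X i : MvPolynomial (Fin 3) k)).IsHomogeneous 1 :=
      fun r i => (isHomogeneous_C _ r).mul (isHomogeneous_X k i)
    intro i j
    fin_cases i <;> fin_cases j <;>
      simp only [Matrix.cons_val', Matrix.cons_val_zero, Matrix.cons_val_one, Matrix.head_cons,
        Matrix.empty_val', Matrix.cons_val_fin_one, Matrix.head_fin_const]
    · exact isHomogeneous_zero _ _ _
    · exact (isHomogeneous_X k 1).sub (hCX m 2)
    · exact (isHomogeneous_X k 0).sub (hCX l 2)
    · exact (isHomogeneous_X k 0).neg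
    · exact hCX _ 2
    · exact (isHomogeneous_X k 1).add (hCX m 2)
    · exact isHomogeneous_X k 2
    · exact (isHomogeneous_X k 0).add (hCX l 2)
    · exact isHomogeneous_zero _ _ _
  · have hC : (C m : MvPolynomial (Fin 3) k) ^ 2
        = C l ^ 3 + C a * C l + C b := by
      have := congrArg (C : k →+* MvPolynomial (Fin 3) k) hm
      simpa [map_pow, map_add, map_mul] using this
    refine (Matrix.det_fin_three _).trans ?_
    simp only [Matrix.cons_val', Matrix.cons_val_zero, Matrix.cons_val_one, Matrix.head_cons,
      Matrix.empty_val', Matrix.cons_val_fin_one, Matrix.head_fin_const, Matrix.cons_val_two,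
      Matrix.tail_cons]
    rw [WCubic, map_one, one_mul, C_add, C_pow]
    linear_combination (-(X 2 : MvPolynomial (Fin 3) k) ^ 3) * hC

lemma real_point (a b : ℝ) : ∃ l m : ℝ, m ^ 2 = l ^ 3 + a * l + b := by
  set l : ℝ := 1 + |a| + |b| with hl
  have h0a : (0:ℝ) ≤ |a| := abs_nonneg a
  have h0b : (0:ℝ) ≤ |b| := abs_nonneg b
  have h1 : (1:ℝ) ≤ l := by rw [hl]; linarith
  have h2 : 0 ≤ l ^ 3 + a * l + b := by
    nlinarith [le_abs_self a, neg_abs_le a, le_abs_self b, neg_abs_le b, sq_nonneg l,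
      sq_nonneg (l-1)]
  exact ⟨l, Real.sqrt (l ^ 3 + a * l + b), Real.sq_sqrt h2⟩

lemma padic_sq (p : ℕ) [hp : Fact p.Prime] (a b : ℤ) :
    ∃ z : ℤ_[p], z ^ 2 = 1 + a * p ^ 4 + b * p ^ 6 := by
  set u : ℤ_[p] := 1 + a * p ^ 4 + b * p ^ 6 with hu
  set F : Polynomial ℤ_[p] := Polynomial.X ^ 2 - Polynomial.C u with hF
  have hev : F.eval 1 = 1 - u := by simp [hF]
  have hdev : (Polynomial.derivative F).eval 1 = 2 := by
    simp [hF, Polynomial.derivative_X_pow]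
    norm_num
  have hnorm : ‖F.eval 1‖ < ‖(Polynomial.derivative F).eval 1‖ ^ 2 := by
    rw [hev, hdev]
    have h1u : (1 : ℤ_[p]) - u = -((p:ℤ_[p]) ^ 4) * (a + b * (p:ℤ_[p]) ^ 2) := by rw [hu]; ring
    have hb : ‖(1:ℤ_[p]) - u‖ ≤ ((p:ℝ))⁻¹ ^ 4 := by
      rw [h1u, norm_mul, norm_neg]
      calc ‖((p:ℤ_[p])) ^ 4‖ * ‖(a:ℤ_[p]) + b * (p:ℤ_[p]) ^ 2‖
          ≤ ‖((p:ℤ_[p])) ^ 4‖ * 1 :=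
            mul_le_mul_of_nonneg_left (PadicInt.norm_le_one _) (norm_nonneg _)
        _ = ((p:ℝ))⁻¹ ^ 4 := by rw [mul_one]; simp [PadicInt.norm_p_pow]
    have hple : ((p:ℝ))⁻¹ ^ 4 < ‖(2:ℤ_[p])‖ ^ 2 := by
      rcases eq_or_ne p 2 with h2 | h2
      · subst h2
        have hn : ‖(2:ℤ_[2])‖ = ((2:ℝ))⁻¹ := by
          have := PadicInt.norm_p (p := 2); simpa using this
        rw [hn]; norm_num
      · have hn : ‖(2:ℤ_[p])‖ = 1 := by
          have hle : ‖(2:ℤ_[p])‖ ≤ 1 := PadicInt.norm_le_one _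
          have hlt : ¬ ‖(2:ℤ_[p])‖ < 1 := by
            have hcast : ((2:ℤ) : ℤ_[p]) = (2:ℤ_[p]) := by norm_cast
            rw [← hcast, PadicInt.norm_int_lt_one_iff_dvd]
            intro hdvd
            have hdvd' : p ∣ 2 := by exact_mod_cast hdvd
            exact h2 ((Nat.prime_dvd_prime_iff_eq hp.out Nat.prime_two).mp hdvd')
          linarith [lt_or_ge ‖(2:ℤ_[p])‖ 1, not_lt.mp hlt]
        rw [hn, one_pow]
        have hp1 : (1:ℝ) < (p:ℝ) := by exact_mod_cast hp.out.one_lt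
        have : ((p:ℝ))⁻¹ < 1 := by
          rw [inv_lt_one_iff₀]; right; exact hp1
        calc ((p:ℝ))⁻¹ ^ 4 < 1 ^ 4 := by
              apply pow_lt_pow_left₀ this (by positivity)
              norm_num
          _ = 1 := one_pow 4
    calc ‖(1:ℤ_[p]) - u‖ ≤ ((p:ℝ))⁻¹ ^ 4 := hb
      _ < _ := hple
  obtain ⟨z, hz, -⟩ := hensels_lemma hnorm
  refine ⟨z, ?_⟩
  have h0 : z ^ 2 - u = 0 := by simpa [hF] using hz
  have := sub_eq_zero.mp h0
  rw [this, hu]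

lemma padic_point (p : ℕ) [hp : Fact p.Prime] (a b : ℤ) :
    ∃ l m : ℚ_[p], m ^ 2 = l ^ 3 + (a:ℚ_[p]) * l + (b:ℚ_[p]) := by
  obtain ⟨z, hz⟩ := padic_sq p a b
  have hp0 : ((p:ℚ_[p])) ≠ 0 := by
    exact_mod_cast (Nat.cast_ne_zero (R := ℚ_[p])).mpr hp.out.ne_zero
  refine ⟨((p:ℚ_[p]))⁻¹ ^ 2, (z : ℚ_[p]) * ((p:ℚ_[p]))⁻¹ ^ 3, ?_⟩
  have hz' : ((z:ℚ_[p])) ^ 2 = 1 + (a:ℚ_[p]) * (p:ℚ_[p]) ^ 4 + (b:ℚ_[p]) * (p:ℚ_[p]) ^ 6 := by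
    exact_mod_cast congrArg (fun w : ℤ_[p] => (w : ℚ_[p])) hz
  field_simp
  linear_combination hz'

def Jmat : Matrix (Fin 3) (Fin 3) ℚ := !![0,1,0;0,0,1;0,0,0]

lemma detXY (Nm : Matrix (Fin 3) (Fin 3) ℚ) (x y : ℚ) :
    (x • (1 : Matrix (Fin 3) (Fin 3) ℚ) + y • Nm).det =
      x ^ 3 + (Nm 0 0 + Nm 1 1 + Nm 2 2) * x ^ 2 * y + (Nm 0 0 * Nm 1 1 + Nm 0 0 * Nm 2 2 + (-1) * Nm 0 1 * Nm 1 0 + (-1) * Nm 0 2 * Nm 2 0 + Nm 1 1 * Nm 2 2 + (-1) * Nm 1 2 * Nm 2 1) * x * y ^ 2 + (Nm 0 0 * Nm 1 1 * Nm 2 2 + (-1) * Nm 0 0 * Nm 1 2 * Nm 2 1 + (-1) * Nm 0 1 * Nm 1 0 * Nm 2 2 + Nm 0 1 * Nm 1 2 * Nm 2 0 + Nm 0 2 * Nm 1 0 * Nm 2 1 + (-1) * Nm 0 2 * Nm 1 1 * Nm 2 0) * y ^ 3 := by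
  simp [Matrix.det_fin_three, Matrix.add_apply, Matrix.smul_apply, Matrix.one_apply]
  ring

lemma detYP (Nm Pm : Matrix (Fin 3) (Fin 3) ℚ) (y : ℚ) :
    (y • Nm + Pm).det =
      (Nm 0 0 * Nm 1 1 * Nm 2 2 + (-1) * Nm 0 0 * Nm 1 2 * Nm 2 1 + (-1) * Nm 0 1 * Nm 1 0 * Nm 2 2 + Nm 0 1 * Nm 1 2 * Nm 2 0 + Nm 0 2 * Nm 1 0 * Nm 2 1 + (-1) * Nm 0 2 * Nm 1 1 * Nm 2 0) * y ^ 3 + (Nm 0 0 * Nm 1 1 * Pm 2 2 + (-1) * Nm 0 0 * Nm 1 2 * Pm 2 1 + (-1) * Nm 0 0 * Nm 2 1 * Pm 1 2 + Nm 0 0 * Nm 2 2 * Pm 1 1 + (-1) * Nm 0 1 * Nm 1 0 * Pm 2 2 + Nm 0 1 * Nm 1 2 * Pm 2 0 + Nm 0 1 * Nm 2 0 * Pm 1 2 + (-1) * Nm 0 1 * Nm 2 2 * Pm 1 0 + Nm 0 2 * Nm 1 0 * Pm 2 1 + (-1) * Nm 0 2 * Nm 1 1 * Pm 2 0 + (-1)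 * Nm 0 2 * Nm 2 0 * Pm 1 1 + Nm 0 2 * Nm 2 1 * Pm 1 0 + Nm 1 0 * Nm 2 1 * Pm 0 2 + (-1) * Nm 1 0 * Nm 2 2 * Pm 0 1 + (-1) * Nm 1 1 * Nm 2 0 * Pm 0 2 + Nm 1 1 * Nm 2 2 * Pm 0 0 + Nm 1 2 * Nm 2 0 * Pm 0 1 + (-1) * Nm 1 2 * Nm 2 1 * Pm 0 0) * y ^ 2 + (Nm 0 0 * Pm 1 1 * Pm 2 2 + (-1) * Nm 0 0 * Pm 1 2 * Pm 2 1 + (-1) * Nm 0 1 * Pm 1 0 * Pm 2 2 + Nm 0 1 * Pm 1 2 * Pm 2 0 + Nm 0 2 * Pm 1 0 * Pm 2 1 + (-1) * Nm 0 2 * Pm 1 1 * Pm 2 0 + (-1) * Nm 1 0 * Pm 0 1 * Pm 2 2 + Nm 1 0 * Pm 0 2 * Pm 2 1 + Nm 1 1 * Pm 0 0 * Pm 2 2 + (-1) * Nm 1 1 * Pm 0 2 * Pm 2 0 + (-1) * Nm 1 2 * Pm 0 0 * Pm 2 1 + Nm 1 2 * Pm 0 1 * Pm 2 0 + Nm 2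 0 * Pm 0 1 * Pm 1 2 + (-1) * Nm 2 0 * Pm 0 2 * Pm 1 1 + (-1) * Nm 2 1 * Pm 0 0 * Pm 1 2 + Nm 2 1 * Pm 0 2 * Pm 1 0 + Nm 2 2 * Pm 0 0 * Pm 1 1 + (-1) * Nm 2 2 * Pm 0 1 * Pm 1 0) * y + (Pm 0 0 * Pm 1 1 * Pm 2 2 + (-1) * Pm 0 0 * Pm 1 2 * Pm 2 1 + (-1) * Pm 0 1 * Pm 1 0 * Pm 2 2 + Pm 0 1 * Pm 1 2 * Pm 2 0 + Pm 0 2 * Pm 1 0 * Pm 2 1 + (-1) * Pm 0 2 * Pm 1 1 * Pm 2 0) := by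
  simp [Matrix.det_fin_three, Matrix.add_apply, Matrix.smul_apply]
  ring

lemma detJform (Qm : Matrix (Fin 3) (Fin 3) ℚ) (x y z : ℚ) :
    (x • (1 : Matrix (Fin 3) (Fin 3) ℚ) + y • Jmat + z • Qm).det =
      x ^ 3 + (Qm 0 0 + Qm 1 1 + Qm 2 2) * x ^ 2 * z + ((-1) * Qm 1 0 + (-1) * Qm 2 1) * x * y * z + (Qm 0 0 * Qm 1 1 + Qm 0 0 * Qm 2 2 + (-1) * Qm 0 1 * Qm 1 0 + (-1) * Qm 0 2 * Qm 2 0 + Qm 1 1 * Qm 2 2 + (-1) * Qm 1 2 * Qm 2 1) * x * z ^ 2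
        + (Qm 2 0) * y ^ 2 * z + ((-1) * Qm 0 0 * Qm 2 1 + Qm 0 1 * Qm 2 0 + (-1) * Qm 1 0 * Qm 2 2 + Qm 1 2 * Qm 2 0) * y * z ^ 2 + (Qm 0 0 * Qm 1 1 * Qm 2 2 + (-1) * Qm 0 0 * Qm 1 2 * Qm 2 1 + (-1) * Qm 0 1 * Qm 1 0 * Qm 2 2 + Qm 0 1 * Qm 1 2 * Qm 2 0 + Qm 0 2 * Qm 1 0 * Qm 2 1 + (-1) * Qm 0 2 * Qm 1 1 * Qm 2 0) * z ^ 3 := by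
  simp [Matrix.det_fin_three, Matrix.add_apply, Matrix.smul_apply, Matrix.one_apply, Jmat,
    Matrix.vecHead, Matrix.vecTail]
  ring

lemma keylemma (a b q00 q01 q02 q10 q11 q12 q20 q21 q22 : ℚ)
    (h1 : q00 + q11 + q22 = 0)
    (h2 : q10 + q21 = 0)
    (h3 : q20 = -1)
    (h4 : (-1) * q00 * q21 + q01 * q20 + (-1) * q10 * q22 + q12 * q20 = 0)
    (h5 : q00 * q11 + q00 * q22 + (-1) * q01 * q10 + (-1) * q02 * q20 + q11 * q22 + (-1) * q12 * q21 = a)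
    (h6 : q00 * q11 * q22 + (-1) * q00 * q12 * q21 + (-1) * q01 * q10 * q22 + q01 * q12 * q20
        + q02 * q10 * q21 + (-1) * q02 * q11 * q20 = b) :
    ∃ lam mu : ℚ, mu ^ 2 = lam ^ 3 + a * lam + b := by
  subst h3
  have h21 : q21 = -q10 := by linarith
  subst h21
  have h22 : q22 = -q00 - q11 := by linarith
  subst h22
  have h12 : q12 = 2 * q00 * q10 + q10 * q11 - q01 := by linear_combination (-1 : ℚ) * h4
  subst h12
  subst h5
  subst h6
  refine ⟨q00 + (-q00 - q11) + q10 ^ 2,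
          q01 - q10 * (2 * q00 + (-q00 - q11) + q10 ^ 2), by ring⟩

theorem eval_of_linear (q : MvPolynomial (Fin 3) ℚ) (h : q.IsHomogeneous 1) (v : Fin 3 → ℚ) :
    eval v q = coeff (Finsupp.single 0 1) q * v 0 + coeff (Finsupp.single 1 1) q * v 1
      + coeff (Finsupp.single 2 1) q * v 2 := by
  classical
  have key : ∀ d ∈ q.support, d = Finsupp.single (0:Fin 3) 1 ∨ d = Finsupp.single 1 1 ∨ d = Finsupp.single 2 1 := by
    intro d hd
    have h3 : (Finsupp.weight (1 : Fin 3 → ℕ)) d = 1 := h (mem_support_iff.mp hd)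
    rw [Finsupp.weight_apply, Finsupp.sum_fintype] at h3
    · simp only [Pi.one_apply, smul_eq_mul, mul_one, Fin.sum_univ_three] at h3
      have h0 : d 0 = 1 ∧ d 1 = 0 ∧ d 2 = 0 ∨ d 0 = 0 ∧ d 1 = 1 ∧ d 2 = 0 ∨ d 0 = 0 ∧ d 1 = 0 ∧ d 2 = 1 := by omega
      rcases h0 with ⟨a,b,c⟩|⟨a,b,c⟩|⟨a,b,c⟩
      · left; ext i; fin_cases i <;> simp [a, b, c, Finsupp.single_apply]
      · right; left; ext i; fin_cases i <;> simp [a, b, c, Finsupp.single_apply]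
      · right; right; ext i; fin_cases i <;> simp [a, b, c, Finsupp.single_apply]
    · intro i; simp
  have hsub : q.support ⊆ ({Finsupp.single (0:Fin 3) 1, Finsupp.single 1 1, Finsupp.single 2 1} : Finset _) := by
    intro d hd; simpa using key d hd
  conv_lhs => rw [← support_sum_monomial_coeff q]
  rw [map_sum, Finset.sum_subset hsub]
  · rw [Finset.sum_insert (by simp [Finsupp.single_eq_single_iff]),
      Finset.sum_insert (by simp [Finsupp.single_eq_single_iff]), Finset.sum_singleton]
    simp [eval_monomial, Finsupp.prod_single_index]
    ring
  · intro d _ hd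
    simp only [mem_support_iff, not_not] at hd
    simp [hd]

open Matrix in
lemma no_LDR (A B : ℚ) (htriv : ¬ ∃ lam mu : ℚ, mu ^ 2 = lam ^ 3 + A * lam + B) :
    ¬ AdmitsLDR 3 (WCubic A B) := by
  rintro ⟨M, hhom, c, hc, hdet⟩
  set M0 : Matrix (Fin 3) (Fin 3) ℚ := Matrix.of fun i j => coeff (Finsupp.single 0 1) (M i j) with hM0
  set M1 : Matrix (Fin 3) (Fin 3) ℚ := Matrix.of fun i j => coeff (Finsupp.single 1 1) (M i j) with hM1
  set M2 : Matrix (Fin 3) (Fin 3) ℚ := Matrix.of fun i j => coeff (Finsupp.single 2 1) (M i j) with hM2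
  have hmap : ∀ x y z : ℚ, M.map (eval ![x,y,z]) = x • M0 + y • M1 + z • M2 := by
    intro x y z
    ext i j
    rw [Matrix.map_apply, eval_of_linear _ (hhom i j)]
    simp [Matrix.add_apply, Matrix.smul_apply, hM0, hM1, hM2]
    ring
  have hfun2 : ∀ x y z : ℚ, (x • M0 + y • M1 + z • M2).det
      = c * (y^2*z - x^3 - A*x*z^2 - B*z^3) := by
    intro x y z
    have h1 := congrArg (eval ![x,y,z]) hdet
    rw [RingHom.map_det, RingHom.mapMatrix_apply, hmap] at h1
    rw [h1]
    simp [WCubic]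
  have hdet0 : M0.det = -c := by
    have h := hfun2 1 0 0
    rw [one_smul, zero_smul, zero_smul, add_zero, add_zero] at h
    rw [h]; ring
  have hu : IsUnit M0.det := by
    rw [hdet0]; exact isUnit_iff_ne_zero.mpr (neg_ne_zero.mpr hc)
  set Nn : Matrix (Fin 3) (Fin 3) ℚ := M0⁻¹ * M1 with hNn
  set Pp : Matrix (Fin 3) (Fin 3) ℚ := M0⁻¹ * M2 with hPp
  have hfun3 : ∀ x y z : ℚ, (x • (1 : Matrix (Fin 3) (Fin 3) ℚ) + y • Nn + z • Pp).det
      = x^3 + A*x*z^2 + B*z^3 - y^2*z := by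
    intro x y z
    have hid : x • (1 : Matrix (Fin 3) (Fin 3) ℚ) + y • Nn + z • Pp
        = M0⁻¹ * (x • M0 + y • M1 + z • M2) := by
      rw [Matrix.mul_add, Matrix.mul_add, Matrix.mul_smul, Matrix.mul_smul, Matrix.mul_smul,
        Matrix.nonsing_inv_mul _ hu, hNn, hPp]
    rw [hid, Matrix.det_mul, Matrix.det_nonsing_inv, hdet0, hfun2, Ring.inverse_eq_inv, inv_neg, neg_mul,
      ← mul_assoc, inv_mul_cancel₀ hc, one_mul]
    ring
  clear hdet hmap hfun2 hdet0 hu hhom hNn hPp hM0 hM1 hM2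
  clear_value Nn Pp
  clear M0 M1 M2 M
  have hxy : ∀ x y : ℚ, (x • (1 : Matrix (Fin 3) (Fin 3) ℚ) + y • Nn).det = x^3 := by
    intro x y
    have h := hfun3 x y 0
    rw [zero_smul, add_zero] at h
    rw [h]; ring
  have hg1 : ∀ x y : ℚ, (Nn 0 0 + Nn 1 1 + Nn 2 2) * x^2*y + (Nn 0 0 * Nn 1 1 + Nn 0 0 * Nn 2 2 + (-1) * Nn 0 1 * Nn 1 0 + (-1) * Nn 0 2 * Nn 2 0 + Nn 1 1 * Nn 2 2 + (-1) * Nn 1 2 * Nn 2 1) * x*y^2 + (Nn 0 0 * Nn 1 1 * Nn 2 2 + (-1) * Nn 0 0 * Nn 1 2 * Nn 2 1 + (-1) * Nn 0 1 * Nn 1 0 * Nn 2 2 + Nn 0 1 * Nn 1 2 * Nn 2 0 + Nn 0 2 * Nn 1 0 * Nn 2 1 + (-1) * Nn 0 2 * Nn 1 1 * Nn 2 0) * y^3 = 0 := by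
    intro x y
    have h := hxy x y
    rw [detXY] at h
    linear_combination h
  have htr : (Nn 0 0 + Nn 1 1 + Nn 2 2) = 0 := by
    linear_combination (hg1 2 1)/3 - (hg1 1 1)/2 - (hg1 1 (-1))/6
  have hs2 : (Nn 0 0 * Nn 1 1 + Nn 0 0 * Nn 2 2 + (-1) * Nn 0 1 * Nn 1 0 + (-1) * Nn 0 2 * Nn 2 0 + Nn 1 1 * Nn 2 2 + (-1) * Nn 1 2 * Nn 2 1) = 0 := by
    linear_combination (hg1 1 1)/2 + (hg1 1 (-1))/2
  have hdN : (Nn 0 0 * Nn 1 1 * Nn 2 2 + (-1) * Nn 0 0 * Nn 1 2 * Nn 2 1 + (-1) * Nn 0 1 * Nn 1 0 * Nn 2 2 + Nn 0 1 * Nn 1 2 * Nn 2 0 + Nn 0 2 * Nn 1 0 * Nn 2 1 + (-1) * Nn 0 2 * Nn 1 1 * Nn 2 0) = 0 := by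
    linear_combination hg1 1 1 - (hg1 2 1)/3 - (hg1 1 (-1))/3
  have hCH : ∀ i j, (Nn*Nn*Nn) i j = (Nn 0 0 + Nn 1 1 + Nn 2 2) * ((Nn*Nn) i j) - (Nn 0 0 * Nn 1 1 + Nn 0 0 * Nn 2 2 + (-1) * Nn 0 1 * Nn 1 0 + (-1) * Nn 0 2 * Nn 2 0 + Nn 1 1 * Nn 2 2 + (-1) * Nn 1 2 * Nn 2 1) * (Nn i j)
      + (Nn 0 0 * Nn 1 1 * Nn 2 2 + (-1) * Nn 0 0 * Nn 1 2 * Nn 2 1 + (-1) * Nn 0 1 * Nn 1 0 * Nn 2 2 + Nn 0 1 * Nn 1 2 * Nn 2 0 + Nn 0 2 * Nn 1 0 * Nn 2 1 + (-1) * Nn 0 2 * Nn 1 1 * Nn 2 0) * ((1 : Matrix (Fin 3) (Fin 3) ℚ) i j) := by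
    intro i j
    fin_cases i <;> fin_cases j <;>
      simp [Matrix.mul_apply, Fin.sum_univ_three, Matrix.one_apply] <;> ring
  have hN3 : Nn*Nn*Nn = 0 := by
    ext i j
    have e := hCH i j
    rw [htr, hs2, hdN] at e
    simpa using e
  by_cases hNN : Nn * Nn = 0
  · have g2 : ∀ yv : ℚ, (yv • Nn + Pp).det = B - yv^2 := by
      intro yv
      have h := hfun3 0 yv 1
      rw [zero_smul, one_smul, zero_add] at h
      rw [h]; ring
    have hg2 : ∀ yv : ℚ, (Nn 0 0 * Nn 1 1 * Nn 2 2 + (-1) * Nn 0 0 * Nn 1 2 * Nn 2 1 + (-1) * Nn 0 1 * Nn 1 0 * Nn 2 2 + Nn 0 1 * Nn 1 2 * Nn 2 0 + Nn 0 2 * Nn 1 0 * Nn 2 1 + (-1) * Nn 0 2 * Nn 1 1 * Nn 2 0) * yv ^ 3 + (Nn 0 0 * Nn 1 1 * Pp 2 2 + (-1) * Nn 0 0 * Nn 1 2 * Pp 2 1 + (-1) * Nn 0 0 * Nn 2 1 * Pp 1 2 + Nn 0 0 * Nn 2 2 * Pp 1 1 + (-1) * Nn 0 1 * Nn 1 0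 * Pp 2 2 + Nn 0 1 * Nn 1 2 * Pp 2 0 + Nn 0 1 * Nn 2 0 * Pp 1 2 + (-1) * Nn 0 1 * Nn 2 2 * Pp 1 0 + Nn 0 2 * Nn 1 0 * Pp 2 1 + (-1) * Nn 0 2 * Nn 1 1 * Pp 2 0 + (-1) * Nn 0 2 * Nn 2 0 * Pp 1 1 + Nn 0 2 * Nn 2 1 * Pp 1 0 + Nn 1 0 * Nn 2 1 * Pp 0 2 + (-1) * Nn 1 0 * Nn 2 2 * Pp 0 1 + (-1) * Nn 1 1 * Nn 2 0 * Pp 0 2 + Nn 1 1 * Nn 2 2 * Pp 0 0 + Nn 1 2 * Nn 2 0 * Pp 0 1 + (-1) * Nn 1 2 * Nn 2 1 * Pp 0 0) * yv ^ 2 + (Nn 0 0 * Pp 1 1 * Pp 2 2 + (-1) * Nn 0 0 * Pp 1 2 * Pp 2 1 + (-1) * Nn 0 1 * Pp 1 0 * Pp 2 2 + Nn 0 1 * Pp 1 2 * Pp 2 0 + Nn 0 2 * Pp 1 0 * Pp 2 1 + (-1) * Nn 0 2 * Pp 1 1 * Pp 2 0 + (-1) * Nn 1 0 * Pp 0 1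 * Pp 2 2 + Nn 1 0 * Pp 0 2 * Pp 2 1 + Nn 1 1 * Pp 0 0 * Pp 2 2 + (-1) * Nn 1 1 * Pp 0 2 * Pp 2 0 + (-1) * Nn 1 2 * Pp 0 0 * Pp 2 1 + Nn 1 2 * Pp 0 1 * Pp 2 0 + Nn 2 0 * Pp 0 1 * Pp 1 2 + (-1) * Nn 2 0 * Pp 0 2 * Pp 1 1 + (-1) * Nn 2 1 * Pp 0 0 * Pp 1 2 + Nn 2 1 * Pp 0 2 * Pp 1 0 + Nn 2 2 * Pp 0 0 * Pp 1 1 + (-1) * Nn 2 2 * Pp 0 1 * Pp 1 0) * yv + (Pp 0 0 * Pp 1 1 * Pp 2 2 + (-1) * Pp 0 0 * Pp 1 2 * Pp 2 1 + (-1) * Pp 0 1 * Pp 1 0 * Pp 2 2 + Pp 0 1 * Pp 1 2 * Pp 2 0 + Pp 0 2 * Pp 1 0 * Pp 2 1 + (-1) * Pp 0 2 * Pp 1 1 * Pp 2 0) = B - yv^2 := by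
      intro yv
      have h := g2 yv
      rw [detYP] at h
      linear_combination h
    have eNN : ∀ i j : Fin 3, Nn i 0 * Nn 0 j + Nn i 1 * Nn 1 j + Nn i 2 * Nn 2 j = 0 := by
      intro i j
      have h := Matrix.ext_iff.mpr hNN i j
      simpa [Matrix.mul_apply, Fin.sum_univ_three] using h
    have hc2m : (Nn 0 0 * Nn 1 1 * Pp 2 2 + (-1) * Nn 0 0 * Nn 1 2 * Pp 2 1 + (-1) * Nn 0 0 * Nn 2 1 * Pp 1 2 + Nn 0 0 * Nn 2 2 * Pp 1 1 + (-1) * Nn 0 1 * Nn 1 0 * Pp 2 2 + Nn 0 1 * Nn 1 2 * Pp 2 0 + Nn 0 1 * Nn 2 0 * Pp 1 2 + (-1) * Nn 0 1 * Nn 2 2 * Pp 1 0 + Nn 0 2 * Nn 1 0 * Pp 2 1 + (-1) * Nn 0 2 * Nn 1 1 * Pp 2 0 + (-1) * Nn 0 2 * Nn 2 0 * Pp 1 1 + Nn 0 2 * Nn 2 1 * Pp 1 0 + Nn 1 0 * Nn 2 1 * Pp 0 2 + (-1) * Nn 1 0 * Nn 2 2 * Pp 0 1 + (-1) * Nn 1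 1 * Nn 2 0 * Pp 0 2 + Nn 1 1 * Nn 2 2 * Pp 0 0 + Nn 1 2 * Nn 2 0 * Pp 0 1 + (-1) * Nn 1 2 * Nn 2 1 * Pp 0 0) = -1 := by
      linear_combination (hg2 1)/2 + (hg2 (-1))/2 - hg2 0
    have hc2z : (Nn 0 0 * Nn 1 1 * Pp 2 2 + (-1) * Nn 0 0 * Nn 1 2 * Pp 2 1 + (-1) * Nn 0 0 * Nn 2 1 * Pp 1 2 + Nn 0 0 * Nn 2 2 * Pp 1 1 + (-1) * Nn 0 1 * Nn 1 0 * Pp 2 2 + Nn 0 1 * Nn 1 2 * Pp 2 0 + Nn 0 1 * Nn 2 0 * Pp 1 2 + (-1) * Nn 0 1 * Nn 2 2 * Pp 1 0 + Nn 0 2 * Nn 1 0 * Pp 2 1 + (-1) * Nn 0 2 * Nn 1 1 * Pp 2 0 + (-1) * Nn 0 2 * Nn 2 0 * Pp 1 1 + Nn 0 2 * Nn 2 1 * Pp 1 0 + Nn 1 0 * Nn 2 1 * Pp 0 2 + (-1) * Nn 1 0 * Nn 2 2 * Pp 0 1 + (-1) * Nn 1 1 * Nn 2 0 * Pp 0 2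 + Nn 1 1 * Nn 2 2 * Pp 0 0 + Nn 1 2 * Nn 2 0 * Pp 0 1 + (-1) * Nn 1 2 * Nn 2 1 * Pp 0 0) = 0 := by
      linear_combination Pp 0 0 * eNN 0 0 + Pp 1 0 * eNN 0 1 + Pp 2 0 * eNN 0 2 + Pp 0 1 * eNN 1 0 + Pp 1 1 * eNN 1 1 + Pp 2 1 * eNN 1 2 + Pp 0 2 * eNN 2 0 + Pp 1 2 * eNN 2 1 + Pp 2 2 * eNN 2 2 + (-(Nn 0 0 * Pp 0 0 + Nn 0 1 * Pp 1 0 + Nn 0 2 * Pp 2 0 + Nn 1 0 * Pp 0 1 + Nn 1 1 * Pp 1 1 + Nn 1 2 * Pp 2 1 + Nn 2 0 * Pp 0 2 + Nn 2 1 * Pp 1 2 + Nn 2 2 * Pp 2 2)) * htr + (Pp 0 0 + Pp 1 1 + Pp 2 2) * hs2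
    have hfalse : (-1 : ℚ) = 0 := by rw [← hc2m, hc2z]
    norm_num at hfalse
  · have hex : ∃ i j, (Nn*Nn) i j ≠ 0 := by
      by_contra hcon
      push_neg at hcon
      exact hNN (by ext i j; simpa using hcon i j)
    obtain ⟨i0, j0, hij⟩ := hex
    set v : Fin 3 → ℚ := Pi.single j0 1 with hv
    set w1 : Fin 3 → ℚ := Nn *ᵥ v with hw1
    set w2 : Fin 3 → ℚ := (Nn*Nn) *ᵥ v with hw2
    have hw2i : w2 i0 ≠ 0 := by
      rw [hw2, hv]
      simpa [Matrix.mulVec_single] using hij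
    have hNw2 : Nn *ᵥ w2 = 0 := by
      rw [hw2, Matrix.mulVec_mulVec, ← Matrix.mul_assoc, hN3, Matrix.zero_mulVec]
    have hNw1 : Nn *ᵥ w1 = w2 := by
      rw [hw1, hw2, Matrix.mulVec_mulVec]
    set S : Matrix (Fin 3) (Fin 3) ℚ := Matrix.of fun i k => ![w2 i, w1 i, v i] k with hS
    have hSJ : Nn * S = S * Jmat := by
      ext i k
      fin_cases k
      · have h0 := congrFun hNw2 i
        simp [Matrix.mulVec, dotProduct, Fin.sum_univ_three] at h0
        simp [Matrix.mul_apply, Fin.sum_univ_three, hS, Jmat, Matrix.vecHead, Matrix.vecTail]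
        linear_combination h0
      · have h0 := congrFun hNw1 i
        simp [Matrix.mulVec, dotProduct, Fin.sum_univ_three] at h0
        simp [Matrix.mul_apply, Fin.sum_univ_three, hS, Jmat, Matrix.vecHead, Matrix.vecTail]
        linear_combination h0
      · simp [Matrix.mul_apply, Fin.sum_univ_three, hS, Jmat, Matrix.vecHead, Matrix.vecTail, hw1, Matrix.mulVec, dotProduct]
    have hdS : IsUnit S.det := by
      rw [isUnit_iff_ne_zero]
      intro h0
      obtain ⟨u, hu0, hSu⟩ := Matrix.exists_mulVec_eq_zero_iff.mpr h0
      have h1 : S *ᵥ (Jmat *ᵥ u) = 0 := by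
        rw [Matrix.mulVec_mulVec, ← hSJ, ← Matrix.mulVec_mulVec, hSu, Matrix.mulVec_zero]
      have h2 : S *ᵥ (Jmat *ᵥ (Jmat *ᵥ u)) = 0 := by
        rw [Matrix.mulVec_mulVec, ← hSJ, ← Matrix.mulVec_mulVec, h1, Matrix.mulVec_zero]
      have hJu : Jmat *ᵥ u = ![u 1, u 2, 0] := by
        funext l
        fin_cases l <;> simp [Jmat, Matrix.vecHead, Matrix.vecTail, Matrix.mulVec, dotProduct, Fin.sum_univ_three]
      have hJJu : Jmat *ᵥ ![u 1, u 2, 0] = ![u 2, (0:ℚ), 0] := by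
        funext l
        fin_cases l <;> simp [Jmat, Matrix.vecHead, Matrix.vecTail, Matrix.mulVec, dotProduct, Fin.sum_univ_three]
      have hu2 : u 2 = 0 := by
        have h3 := congrFun h2 i0
        rw [hJu, hJJu] at h3
        simp [Matrix.mulVec, dotProduct, Fin.sum_univ_three, hS] at h3
        rcases h3 with h | h
        · exact absurd h hw2i
        · exact h
      have hu1 : u 1 = 0 := by
        have h3 := congrFun h1 i0
        rw [hJu] at h3
        simp [Matrix.mulVec, dotProduct, Fin.sum_univ_three, hS, hu2] at h3
        rcases h3 with h | h
        · exact absurd h hw2i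
        · exact h
      have hu0' : u 0 = 0 := by
        have h3 := congrFun hSu i0
        simp [Matrix.mulVec, dotProduct, Fin.sum_univ_three, hS, hu1, hu2] at h3
        rcases h3 with h | h
        · exact absurd h hw2i
        · exact h
      exact hu0 (funext fun l => by fin_cases l <;> assumption)
    have hdSne : S.det ≠ 0 := isUnit_iff_ne_zero.mp hdS
    set Qq : Matrix (Fin 3) (Fin 3) ℚ := S⁻¹ * Pp * S with hQ
    have e1 : ∀ x y z : ℚ, S⁻¹ * ((x • (1:Matrix (Fin 3) (Fin 3) ℚ) + y • Nn + z • Pp) * S)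
        = x • (1:Matrix (Fin 3) (Fin 3) ℚ) + y • Jmat + z • Qq := by
      intro x y z
      rw [Matrix.add_mul, Matrix.add_mul, Matrix.smul_mul, Matrix.smul_mul, Matrix.smul_mul,
        Matrix.one_mul, hSJ, Matrix.mul_add, Matrix.mul_add, Matrix.mul_smul, Matrix.mul_smul,
        Matrix.mul_smul, ← Matrix.mul_assoc, ← Matrix.mul_assoc,
        Matrix.nonsing_inv_mul _ hdS, Matrix.one_mul, ← hQ]
    have hfun4 : ∀ x y z : ℚ, (x • (1 : Matrix (Fin 3) (Fin 3) ℚ) + y • Jmat + z • Qq).det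
        = x^3 + A*x*z^2 + B*z^3 - y^2*z := by
      intro x y z
      rw [← e1 x y z, Matrix.det_mul, Matrix.det_mul, Matrix.det_nonsing_inv,
        Ring.inverse_eq_inv, hfun3, mul_comm (x^3 + A*x*z^2 + B*z^3 - y^2*z) S.det,
        ← mul_assoc, inv_mul_cancel₀ hdSne, one_mul]
    clear e1 hSJ hdS hNw1 hNw2 hw2i hw1 hw2 hv hS hQ hij hfun3 hxy hg1 hCH hN3 hNN
    clear_value Qq
    have hgq : ∀ x y : ℚ, (Qq 0 0 + Qq 1 1 + Qq 2 2) * x^2 + ((-1) * Qq 1 0 + (-1) * Qq 2 1) * x*y + ((Qq 0 0 * Qq 1 1 + Qq 0 0 * Qq 2 2 + (-1) * Qq 0 1 * Qq 1 0 + (-1) * Qq 0 2 * Qq 2 0 + Qq 1 1 * Qq 2 2 + (-1) * Qq 1 2 * Qq 2 1) - A) * x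
        + (Qq 2 0 + 1) * y^2 + ((-1) * Qq 0 0 * Qq 2 1 + Qq 0 1 * Qq 2 0 + (-1) * Qq 1 0 * Qq 2 2 + Qq 1 2 * Qq 2 0) * y + ((Qq 0 0 * Qq 1 1 * Qq 2 2 + (-1) * Qq 0 0 * Qq 1 2 * Qq 2 1 + (-1) * Qq 0 1 * Qq 1 0 * Qq 2 2 + Qq 0 1 * Qq 1 2 * Qq 2 0 + Qq 0 2 * Qq 1 0 * Qq 2 1 + (-1) * Qq 0 2 * Qq 1 1 * Qq 2 0) - B) = 0 := by
      intro x y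
      have h := hfun4 x y 1
      rw [detJform] at h
      linear_combination h
    have hq1 : Qq 0 0 + Qq 1 1 + Qq 2 2 = 0 := by
      linear_combination (hgq 1 0)/2 + (hgq (-1) 0)/2 - hgq 0 0
    have hq2 : Qq 1 0 + Qq 2 1 = 0 := by
      linear_combination -(hgq 1 1) + hgq 1 0 + hgq 0 1 - hgq 0 0
    have hq3 : Qq 2 0 = -1 := by
      linear_combination (hgq 0 1)/2 + (hgq 0 (-1))/2 - hgq 0 0
    have hq4 : (-1) * Qq 0 0 * Qq 2 1 + Qq 0 1 * Qq 2 0 + (-1) * Qq 1 0 * Qq 2 2 + Qq 1 2 * Qq 2 0 = 0 := by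
      linear_combination (hgq 0 1)/2 - (hgq 0 (-1))/2
    have hq5 : Qq 0 0 * Qq 1 1 + Qq 0 0 * Qq 2 2 + (-1) * Qq 0 1 * Qq 1 0 + (-1) * Qq 0 2 * Qq 2 0
        + Qq 1 1 * Qq 2 2 + (-1) * Qq 1 2 * Qq 2 1 = A := by
      linear_combination (hgq 1 0)/2 - (hgq (-1) 0)/2
    have hq6 : Qq 0 0 * Qq 1 1 * Qq 2 2 + (-1) * Qq 0 0 * Qq 1 2 * Qq 2 1 + (-1) * Qq 0 1 * Qq 1 0 * Qq 2 2
        + Qq 0 1 * Qq 1 2 * Qq 2 0 + Qq 0 2 * Qq 1 0 * Qq 2 1 + (-1) * Qq 0 2 * Qq 1 1 * Qq 2 0 = B := by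
      linear_combination hgq 0 0
    exact htriv (keylemma A B (Qq 0 0) (Qq 0 1) (Qq 0 2) (Qq 1 0) (Qq 1 1) (Qq 1 2)
      (Qq 2 0) (Qq 2 1) (Qq 2 2) hq1 hq2 hq3 hq4 hq5 hq6)

/-- if the elliptic curve `y² = x³ + Ax + B` (`A, B ∈ ℤ`, `4A³ + 27B² ≠ 0`) has
trivial Mordell–Weil group over `ℚ`, then the plane cubic `X₁²X₂ − X₀³ − AX₀X₂² − BX₂³` fails
the local-global principle for the existence of linear determinantal representations: it admits
one over `ℝ` and over every `ℚ_p`, but not over `ℚ`. -/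
theorem stmt_10 (A B : ℤ) (hΔ : 4 * A ^ 3 + 27 * B ^ 2 ≠ 0)
    (htriv : ¬ ∃ lam mu : ℚ, mu ^ 2 = lam ^ 3 + (A : ℚ) * lam + (B : ℚ)) :
    AdmitsLDR 3 (map (algebraMap ℚ ℝ) (WCubic (A : ℚ) (B : ℚ))) ∧
    (∀ (p : ℕ) [Fact p.Prime], AdmitsLDR 3 (map (algebraMap ℚ ℚ_[p]) (WCubic (A : ℚ) (B : ℚ)))) ∧
    ¬ AdmitsLDR 3 (WCubic (A : ℚ) (B : ℚ)) := by
  refine ⟨?_, ?_, no_LDR (A:ℚ) (B:ℚ) htriv⟩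
  · rw [map_WCubic]
    obtain ⟨l, m, hm⟩ := real_point ((algebraMap ℚ ℝ) (A:ℚ)) ((algebraMap ℚ ℝ) (B:ℚ))
    exact admits_of_point _ _ l m hm
  · intro p hp
    rw [map_WCubic]
    obtain ⟨l, m, hm⟩ := padic_point p A B
    have hA : (algebraMap ℚ ℚ_[p]) (A:ℚ) = ((A:ℤ):ℚ_[p]) := map_intCast _ A
    have hB : (algebraMap ℚ ℚ_[p]) (B:ℚ) = ((B:ℤ):ℚ_[p]) := map_intCast _ B
    rw [hA, hB]
    exact admits_of_point _ _ l m hm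
end

section
/- Let k be an infinite field and let f ∈ k[X₀, X₁, X₂] be a homogeneous cubic form defining a smooth plane cubic. Then there exists a finite separable field extension L of k of degree 1 or 3 such that the cubic has an L-rational point, i.e., there is a nonzero vector x ∈ L³ on which the image of f in L[X₀, X₁, X₂] vanishes. -/
open MvPolynomial

section StmtTwelveAux

variable {k : Type*} [Field k]

/-- Substitution of a parametrized line into a ternary form. -/
noncomputable def lineSub (p q : Fin 3 → k) :
    MvPolynomial (Fin 3) k →ₐ[k] Polynomial k :=
  MvPolynomial.aeval fun j => Polynomial.C (p j) + Polynomial.C (q j) * Polynomial.X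

lemma eval_lineSub (p q : Fin 3 → k) (r : k) (f : MvPolynomial (Fin 3) k) :
    (lineSub p q f).eval r = MvPolynomial.eval (fun j => p j + q j * r) f := by
  induction f using MvPolynomial.induction_on with
  | C a => simp [lineSub]
  | add f g hf hg => simp [lineSub] at hf hg ⊢; rw [hf, hg]
  | mul_X f i hf => simp [lineSub] at hf ⊢; simp [hf]

lemma lineSub_map_eval {L : Type*} [Field L] [Algebra k L] (p q : Fin 3 → k) (t : L)
    (f : MvPolynomial (Fin 3) k) :
    MvPolynomial.eval (fun j => algebraMap k L (p j) + algebraMap k L (q j) * t)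
        (MvPolynomial.map (algebraMap k L) f)
      = Polynomial.aeval t (lineSub p q f) := by
  induction f using MvPolynomial.induction_on with
  | C a => simp [lineSub]
  | add f g hf hg => simp [lineSub, map_add] at hf hg ⊢; simp [hf, hg]
  | mul_X f i hf => simp [lineSub, map_mul] at hf ⊢; simp [hf]

lemma eval_map_algebraMap' {L : Type*} [Field L] [Algebra k L] (x : Fin 3 → k)
    (f : MvPolynomial (Fin 3) k) :
    MvPolynomial.eval (fun j => algebraMap k L (x j)) (MvPolynomial.map (algebraMap k L) f)
      = algebraMap k L (MvPolynomial.eval x f) := by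
  induction f using MvPolynomial.induction_on with
  | C a => simp
  | add f g hf hg => simp [hf, hg]
  | mul_X f i hf => simp [hf]

lemma coeff_prod_of_natDegree_le' {ι : Type*} (s : Finset ι) (F : ι → Polynomial k)
    (d : ι → ℕ) (h : ∀ i ∈ s, (F i).natDegree ≤ d i) :
    (∏ i ∈ s, F i).coeff (∑ i ∈ s, d i) = ∏ i ∈ s, (F i).coeff (d i) := by
  classical
  induction s using Finset.induction_on with
  | empty => simp
  | @insert a s ha ih =>
    rw [Finset.prod_insert ha, Finset.sum_insert ha,
      Polynomial.coeff_mul_add_eq_of_natDegree_le (h a (Finset.mem_insert_self a s))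
        ((Polynomial.natDegree_prod_le _ _).trans
          (Finset.sum_le_sum fun i hi => h i (Finset.mem_insert_of_mem hi))),
      ih fun i hi => h i (Finset.mem_insert_of_mem hi), Finset.prod_insert ha]

lemma degree_sum_fin3 {m : Fin 3 →₀ ℕ} : ∑ j : Fin 3, m j = m.degree := by
  rw [Finsupp.degree]
  exact (Finset.sum_subset (Finset.subset_univ _)
    (fun x _ hx => Finsupp.notMem_support_iff.mp hx)).symm

lemma base_natDegree_le (a b : k) :
    (Polynomial.C a + Polynomial.C b * Polynomial.X).natDegree ≤ 1 := by
  compute_degree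

lemma lineSub_natDegree_le (p q : Fin 3 → k) (f : MvPolynomial (Fin 3) k)
    (hf : f.IsHomogeneous 3) : (lineSub p q f).natDegree ≤ 3 := by
  conv_lhs => rw [← f.support_sum_monomial_coeff]
  rw [map_sum]
  apply Polynomial.natDegree_sum_le_of_forall_le
  intro m hm
  have hdm : m.degree = 3 := by
    by_contra h
    exact MvPolynomial.mem_support_iff.mp hm (hf.coeff_eq_zero h)
  simp only [lineSub, MvPolynomial.aeval_monomial, Finsupp.prod_pow]
  refine (Polynomial.natDegree_mul_le).trans ?_
  have h1 : ((algebraMap k (Polynomial k)) (MvPolynomial.coeff m f)).natDegree = 0 := by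
    simp [Polynomial.algebraMap_eq]
  rw [h1, zero_add]
  refine (Polynomial.natDegree_prod_le _ _).trans ?_
  refine le_trans (Finset.sum_le_sum (g := fun j => m j) fun j _ =>
    (Polynomial.natDegree_pow_le).trans
      (by simpa using Nat.mul_le_mul_left (m j) (base_natDegree_le (p j) (q j)))) ?_
  exact le_of_eq (by rw [degree_sum_fin3, hdm])

lemma lineSub_coeff_three (p q : Fin 3 → k) (f : MvPolynomial (Fin 3) k)
    (hf : f.IsHomogeneous 3) : (lineSub p q f).coeff 3 = MvPolynomial.eval q f := by
  conv_lhs => rw [← f.support_sum_monomial_coeff]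
  conv_rhs => rw [← f.support_sum_monomial_coeff]
  rw [map_sum, Polynomial.finset_sum_coeff, map_sum]
  refine Finset.sum_congr rfl fun m hm => ?_
  have hdm : m.degree = 3 := by
    by_contra h
    exact MvPolynomial.mem_support_iff.mp hm (hf.coeff_eq_zero h)
  simp only [lineSub, MvPolynomial.aeval_monomial, MvPolynomial.eval_monomial, Finsupp.prod_pow,
    Polynomial.algebraMap_eq, Polynomial.coeff_C_mul]
  congr 1
  have h3 : ∑ j : Fin 3, m j = 3 := by rw [degree_sum_fin3, hdm]
  have hkey := coeff_prod_of_natDegree_le' Finset.univ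
    (fun a => (Polynomial.C (p a) + Polynomial.C (q a) * Polynomial.X) ^ m a) (fun a => m a)
    (fun j _ => (Polynomial.natDegree_pow_le).trans
      (by simpa using Nat.mul_le_mul_left (m j) (base_natDegree_le (p j) (q j))))
  rw [h3] at hkey
  rw [hkey]
  refine Finset.prod_congr rfl fun j _ => ?_
  have hc := Polynomial.coeff_pow_of_natDegree_le
      (p := Polynomial.C (p j) + Polynomial.C (q j) * Polynomial.X)
      (n := 1) (m := m j) (base_natDegree_le (p j) (q j))
  rw [mul_one] at hc
  rw [hc]
  simp

lemma derivative_mvaeval (g : Fin 3 → Polynomial k) (f : MvPolynomial (Fin 3) k) :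
    Polynomial.derivative (MvPolynomial.aeval g f) =
      ∑ l : Fin 3, MvPolynomial.aeval g (MvPolynomial.pderiv l f) * Polynomial.derivative (g l) := by
  induction f using MvPolynomial.induction_on with
  | C a => simp
  | add f f' hf hf' =>
      simp only [map_add, Polynomial.derivative_add, hf, hf', add_mul, Finset.sum_add_distrib]
  | mul_X f i hf =>
      have h1 : ∀ l : Fin 3, MvPolynomial.pderiv l (f * MvPolynomial.X i) =
          MvPolynomial.pderiv l f * MvPolynomial.X i + if l = i then f else 0 := by
        intro l
        rw [MvPolynomial.pderiv_mul]
        by_cases h : l = i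
        · subst h; simp [MvPolynomial.pderiv_X_self]
        · simp [MvPolynomial.pderiv_X_of_ne (Ne.symm h), h]
      rw [map_mul, MvPolynomial.aeval_X, Polynomial.derivative_mul, hf]
      have h2 : ∀ l : Fin 3,
          (MvPolynomial.aeval g) ((MvPolynomial.pderiv l) (f * MvPolynomial.X i))
              * Polynomial.derivative (g l)
          = (MvPolynomial.aeval g) ((MvPolynomial.pderiv l) f) * g i * Polynomial.derivative (g l)
            + (if l = i then (MvPolynomial.aeval g) f else 0) * Polynomial.derivative (g l) := by
        intro l
        rw [h1 l, map_add, map_mul, MvPolynomial.aeval_X, apply_ite (MvPolynomial.aeval g),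
          map_zero, add_mul]
      rw [Finset.sum_congr rfl fun l _ => h2 l, Finset.sum_add_distrib, Finset.sum_mul]
      refine congrArg₂ (· + ·) ?_ ?_
      · exact Finset.sum_congr rfl fun l _ => by ring
      · rw [Finset.sum_eq_single i]
        · simp
        · intro b _ hb; simp [hb]
        · intro h; exact absurd (Finset.mem_univ i) h

lemma exists_nontrivial_zero {K : Type*} [Field K] [IsAlgClosed K] (f : MvPolynomial (Fin 3) K)
    (hf : f.IsHomogeneous 3) :
    ∃ x : Fin 3 → K, x ≠ 0 ∧ MvPolynomial.eval x f = 0 := by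
  by_cases h1 : MvPolynomial.eval (Pi.single 1 1) f = 0
  · refine ⟨Pi.single 1 1, ?_, h1⟩
    intro h
    have h2 := congrFun h 1
    simp at h2
  · have hc3 : (lineSub (Pi.single 0 1) (Pi.single 1 1) f).coeff 3
        = MvPolynomial.eval (Pi.single 1 1) f := lineSub_coeff_three _ _ f hf
    have hnd : 3 ≤ (lineSub (Pi.single 0 1) (Pi.single 1 1) f).natDegree :=
      Polynomial.le_natDegree_of_ne_zero (by rw [hc3]; exact h1)
    have hdeg : (lineSub (Pi.single 0 1) (Pi.single 1 1) f).degree ≠ 0 := by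
      intro h
      have h2 : (lineSub (Pi.single 0 1) (Pi.single 1 1) f).natDegree = 0 :=
        Polynomial.natDegree_eq_zero_iff_degree_le_zero.mpr h.le
      omega
    obtain ⟨z, hz⟩ := IsAlgClosed.exists_root _ hdeg
    refine ⟨fun j => (Pi.single 0 1 : Fin 3 → K) j + (Pi.single 1 1 : Fin 3 → K) j * z, ?_, ?_⟩
    · intro h
      have h2 := congrFun h 0
      simp at h2
    · rw [← eval_lineSub]; exact hz

end StmtTwelveAux

/-- a smooth plane cubic over an infinite field `k` has an `L`-rational point
for some finite separable field extension `L/k` of degree 1 or 3 (realized inside an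
algebraic closure of `k`). -/
theorem stmt_12 {k : Type*} [Field k] [Infinite k] (f : MvPolynomial (Fin 3) k)
    (hdeg : f.IsHomogeneous 3) (hsm : DefinesSmoothPlaneCurve f) :
    ∃ L : IntermediateField k (AlgebraicClosure k),
      Algebra.IsSeparable k L ∧
      (Module.finrank k L = 1 ∨ Module.finrank k L = 3) ∧
      ∃ x : Fin 3 → L, x ≠ 0 ∧ eval x (map (algebraMap k L) f) = 0 := by
  classical
  obtain ⟨hf0, hs⟩ := hsm
  by_cases hkpt : ∃ x : Fin 3 → k, x ≠ 0 ∧ eval x f = 0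
  · obtain ⟨x₀, hx0, hfx⟩ := hkpt
    refine ⟨⊥, ?_, Or.inl IntermediateField.finrank_bot,
      fun l => algebraMap k _ (x₀ l), ?_, ?_⟩
    · constructor
      intro x
      obtain ⟨c, hc⟩ := IntermediateField.mem_bot.mp x.2
      have hx : algebraMap k (⊥ : IntermediateField k (AlgebraicClosure k)) c = x := by
        apply Subtype.ext
        exact hc
      have hsep : IsSeparable k (algebraMap k (⊥ : IntermediateField k (AlgebraicClosure k)) c) := by
        unfold IsSeparable
        rw [minpoly.eq_X_sub_C]
        exact Polynomial.separable_X_sub_C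
      rwa [hx] at hsep
    · intro h
      apply hx0
      funext l
      have h2 := congrFun h l
      exact (algebraMap k (⊥ : IntermediateField k (AlgebraicClosure k))).injective (by simpa using h2)
    · rw [eval_map_algebraMap', hfx, map_zero]
  · push_neg at hkpt
    -- Step 1: find `P ≠ 0` and a coordinate `i` where some partial derivative is nonzero.
    have hex : ∃ (P : Fin 3 → k) (i : Fin 3), P ≠ 0 ∧ eval P (pderiv i f) ≠ 0 := by
      by_contra hcon
      push_neg at hcon
      have hz : ∀ i, pderiv i f = 0 := by
        intro i
        have hXz : (X 0 * pderiv i f : MvPolynomial (Fin 3) k) = 0 := by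
          apply MvPolynomial.funext
          intro x
          rw [map_zero, MvPolynomial.eval_mul]
          by_cases hx : x = 0
          · subst hx; simp
          · rw [hcon x i hx, mul_zero]
        rcases mul_eq_zero.mp hXz with h | h
        · exact absurd h (MvPolynomial.X_ne_zero 0)
        · exact h
      obtain ⟨x, hx0, hxf⟩ := exists_nontrivial_zero
        (MvPolynomial.map (algebraMap k (AlgebraicClosure k)) f) (hdeg.map _)
      refine hx0 (hs x ⟨hxf, ?_⟩)
      intro i
      rw [MvPolynomial.pderiv_map, hz i, map_zero, map_zero]
    obtain ⟨P, i, hP0, hPd⟩ := hex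
    set v : Fin 3 → k := fun l => eval P (pderiv l f) with hv
    have hvi : v i ≠ 0 := hPd
    set j : Fin 3 := if i = 0 then 1 else 0 with hj
    have hji : j ≠ i := by
      rcases eq_or_ne i 0 with h | h
      · rw [hj, if_pos h, h]; decide
      · rw [hj, if_neg h]; exact Ne.symm h
    obtain ⟨c, hc⟩ := Infinite.exists_notMem_finset
      ({P j * (P i)⁻¹, -(v i) * (v j)⁻¹} : Finset k)
    rw [Finset.mem_insert, Finset.mem_singleton] at hc
    push_neg at hc
    obtain ⟨hc1, hc2⟩ := hc
    set Q : Fin 3 → k := fun l => (if l = i then 1 else 0) + (if l = j then c else 0) with hQ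
    have hQi : Q i = 1 := by rw [hQ]; simp [Ne.symm hji]
    have hQj : Q j = c := by rw [hQ]; simp [hji]
    have hA : ∑ l : Fin 3, v l * Q l = v i + c * v j := by
      rw [hQ]
      simp only [mul_add, mul_ite, mul_one, mul_zero, Finset.sum_add_distrib,
        Finset.sum_ite_eq', Finset.mem_univ, if_true]
      ring
    have hAne : v i + c * v j ≠ 0 := by
      by_cases hvj : v j = 0
      · simpa [hvj] using hvi
      · intro h
        apply hc2
        field_simp
        linear_combination h
    have hB : ∀ r : k, (fun l => P l + Q l * r) ≠ 0 := by
      intro r h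
      have hi := congrFun h i
      have hjj := congrFun h j
      simp only [hQi, hQj, one_mul, Pi.zero_apply] at hi hjj
      by_cases hPi : P i = 0
      · apply hP0
        funext l
        have hr : r = 0 := by rw [hPi, zero_add] at hi; exact hi
        have h2 := congrFun h l
        rw [hr, mul_zero, add_zero] at h2
        exact h2
      · apply hc1
        have hr : r = -P i := by linear_combination hi
        rw [hr] at hjj
        field_simp
        linear_combination -hjj
    have hQne : Q ≠ 0 := by
      intro h
      have h2 := congrFun h i
      rw [hQi] at h2
      exact one_ne_zero h2
    have hC : eval Q f ≠ 0 := hkpt Q hQne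
    set G : Polynomial k := lineSub P Q f with hG
    have hc3 : G.coeff 3 = eval Q f := lineSub_coeff_three P Q f hdeg
    have hnd3 : G.natDegree ≤ 3 := lineSub_natDegree_le P Q f hdeg
    have hndeq : G.natDegree = 3 :=
      le_antisymm hnd3 (Polynomial.le_natDegree_of_ne_zero (by rw [hc3]; exact hC))
    have hG0 : G ≠ 0 := fun h => by simp [h] at hndeq
    have hGroot : ∀ r : k, ¬ G.IsRoot r := by
      intro r hr
      rw [Polynomial.IsRoot, hG, eval_lineSub] at hr
      exact hkpt _ (hB r) hr
    have hGirr : Irreducible G := by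
      rw [Polynomial.irreducible_iff_roots_eq_zero_of_degree_le_three (by omega) (by omega)]
      rw [Multiset.eq_zero_iff_forall_notMem]
      intro r hr
      exact hGroot r (Polynomial.isRoot_of_mem_roots hr)
    have hGder : Polynomial.derivative G ≠ 0 := by
      intro h
      have h0 : (Polynomial.derivative G).eval 0 = ∑ l : Fin 3, v l * Q l := by
        rw [hG]
        show (Polynomial.derivative ((MvPolynomial.aeval
          fun jj => Polynomial.C (P jj) + Polynomial.C (Q jj) * Polynomial.X) f)).eval 0 = _
        rw [derivative_mvaeval, Polynomial.eval_finset_sum]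
        refine Finset.sum_congr rfl fun l _ => ?_
        rw [Polynomial.eval_mul]
        congr 1
        · have h3 := eval_lineSub P Q 0 (pderiv l f)
          simp only [lineSub] at h3
          rw [h3]
          simp [hv]
        · simp [Polynomial.derivative_add, Polynomial.derivative_C_mul_X]
      rw [h] at h0
      simp only [Polynomial.eval_zero] at h0
      exact hAne (by rw [← hA, ← h0])
    have hGsep : G.Separable := (Polynomial.separable_iff_derivative_ne_zero hGirr).mpr hGder
    have hdegG : (G.map (algebraMap k (AlgebraicClosure k))).degree ≠ 0 := by
      rw [Polynomial.degree_map, Polynomial.degree_eq_natDegree hG0, hndeq]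
      decide
    obtain ⟨θ, hθ⟩ := IsAlgClosed.exists_root _ hdegG
    have haev : Polynomial.aeval θ G = 0 := by
      rwa [Polynomial.aeval_def, ← Polynomial.eval_map]
    have hint : IsIntegral k θ := IsAlgebraic.isIntegral ⟨G, hG0, haev⟩
    obtain ⟨u, hu⟩ := minpoly.dvd k θ haev
    have huu : IsUnit u := (hGirr.isUnit_or_isUnit hu).resolve_left (minpoly.not_isUnit k θ)
    have hmdeg : (minpoly k θ).natDegree = 3 := by
      rw [hu, Polynomial.natDegree_mul (minpoly.ne_zero hint) huu.ne_zero,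
        Polynomial.natDegree_eq_zero_of_isUnit huu, add_zero] at hndeq
      exact hndeq
    have hsepθ : IsSeparable k θ := hGsep.of_dvd (minpoly.dvd k θ haev)
    refine ⟨IntermediateField.adjoin k {θ}, ?_, Or.inr ?_, ?_⟩
    · exact (IntermediateField.isSeparable_adjoin_simple_iff_isSeparable
        (F := k) (E := AlgebraicClosure k)).mpr hsepθ
    · rw [IntermediateField.adjoin.finrank hint, hmdeg]
    · set gen := IntermediateField.AdjoinSimple.gen k θ with hgen
      have hgenmap : algebraMap (IntermediateField.adjoin k {θ}) (AlgebraicClosure k) gen = θ :=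
        IntermediateField.AdjoinSimple.algebraMap_gen k θ
      have haevgen : Polynomial.aeval gen G = 0 := by
        apply (algebraMap (IntermediateField.adjoin k {θ}) (AlgebraicClosure k)).injective
        have h4 := Polynomial.aeval_algHom_apply
          (IsScalarTower.toAlgHom k (IntermediateField.adjoin k {θ}) (AlgebraicClosure k)) gen G
        simp only [IsScalarTower.coe_toAlgHom'] at h4
        rw [map_zero, ← h4, hgenmap, haev]
      refine ⟨fun l => algebraMap k _ (P l) + algebraMap k _ (Q l) * gen, ?_, ?_⟩
      · intro h
        have hi := congrFun h i
        simp only [hQi, map_one, one_mul, Pi.zero_apply] at hi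
        have hgen2 : gen = algebraMap k _ (-(P i)) := by
          rw [map_neg]
          linear_combination hi
        have hθ2 : θ = algebraMap k (AlgebraicClosure k) (-(P i)) := by
          rw [← hgenmap, hgen2, ← IsScalarTower.algebraMap_apply]
        apply hGroot (-(P i))
        have h5 : Polynomial.aeval θ G
            = algebraMap k (AlgebraicClosure k) (G.eval (-(P i))) := by
          rw [hθ2, Polynomial.aeval_algebraMap_apply_eq_algebraMap_eval]
        apply (algebraMap k (AlgebraicClosure k)).injective
        rw [← h5, haev, map_zero]
      · rw [lineSub_map_eval P Q gen f]
        exact haevgen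
end
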